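/- Let F : ℝⁿ → Set ℝⁿ be upper semicontinuous with F(x) nonempty, compact, and convex for every x, let X_o, X_u ⊆ ℝⁿ, and let B : ℝⁿ → ℝ be a continuously differentiable barrier function candidate with respect to (X_o, X_u) with zero-sublevel set K. If ⟨∇B(x), η⟩ < 0 for every x ∈ ∂K and every η ∈ F(x), then the system ẋ ∈ F(x) is strongly robustly safe with respect to (X_o, X_u). -/

import Mathlib

open Metric Set Filter MeasureTheory
open scoped Pointwise RealInnerProductSpace Topology

variable {E : Type*} [NormedAddCommGroup E] [NormedSpace ℝ E]

/-- Admissible solution domains: `[0,T]`, `[0,T)`, or `[0,∞)`. -/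
def SolDomain (D : Set ℝ) : Prop :=
  (∃ T : ℝ, 0 ≤ T ∧ D = Set.Icc 0 T) ∨ (∃ T : ℝ, 0 < T ∧ D = Set.Ico 0 T) ∨ D = Set.Ici 0

/-- `φ` is a (locally absolutely continuous) solution of `ẋ ∈ F x` on `D`,
expressed in integral form: `φ t = φ 0 + ∫₀ᵗ v`, with `v t ∈ F (φ t)` a.e. on `D`. -/
def IsSolutionOn (F : E → Set E) (φ : ℝ → E) (D : Set ℝ) : Prop :=
  SolDomain D ∧ ∃ v : ℝ → E,
    (∀ t ∈ D, MeasureTheory.IntegrableOn v (Set.Icc 0 t)) ∧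
    (∀ t ∈ D, φ t = φ 0 + ∫ s in (0:ℝ)..t, v s) ∧
    (∀ᵐ t ∂(MeasureTheory.volume.restrict D), v t ∈ F (φ t))

/-- Safety: no solution starting in `Xo` ever reaches `Xu`. -/
def Safe (F : E → Set E) (Xo Xu : Set E) : Prop :=
  ∀ (φ : ℝ → E) (D : Set ℝ), IsSolutionOn F φ D → φ 0 ∈ Xo → ∀ t ∈ D, φ t ∉ Xu

/-- Forward invariance of `K`. -/
def ForwardInvariant (F : E → Set E) (K : Set E) : Prop :=
  ∀ (φ : ℝ → E) (D : Set ℝ), IsSolutionOn F φ D → φ 0 ∈ K → ∀ t ∈ D, φ t ∈ K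

/-- Image of a set under a set-valued map: `F(S) = ⋃_{y ∈ S} F(y)`. -/
def svImage (F : E → Set E) (S : Set E) : Set E := ⋃ y ∈ S, F y

/-- Right-hand side of the strongly perturbed system `Σ^s_ε`:
`conv (F (x + ε(x)𝔹)) + ε(x)𝔹`. -/
def strongPert (F : E → Set E) (ε : E → ℝ) (x : E) : Set E :=
  convexHull ℝ (svImage F (Metric.closedBall x (ε x))) + Metric.closedBall (0:E) (ε x)

/-- Right-hand side of the (ordinary) perturbed system `Σ_ε`: `F x + ε(x)𝔹`. -/
def pert (F : E → Set E) (ε : E → ℝ) (x : E) : Set E :=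
  F x + Metric.closedBall (0:E) (ε x)

def RobustlySafe (F : E → Set E) (Xo Xu : Set E) : Prop :=
  ∃ ε : E → ℝ, Continuous ε ∧ (∀ x, 0 < ε x) ∧ Safe (pert F ε) Xo Xu

def StronglyRobustlySafe (F : E → Set E) (Xo Xu : Set E) : Prop :=
  ∃ ε : E → ℝ, Continuous ε ∧ (∀ x, 0 < ε x) ∧ Safe (strongPert F ε) Xo Xu

def UniformlyStronglyRobustlySafe (F : E → Set E) (Xo Xu : Set E) : Prop :=
  ∃ ε : ℝ, 0 < ε ∧ Safe (strongPert F (fun _ => ε)) Xo Xu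

/-- Upper semicontinuity of a set-valued map. -/
def UpperSemicontinuousSV (F : E → Set E) : Prop :=
  ∀ x : E, ∀ U : Set E, IsOpen U → F x ⊆ U → ∀ᶠ y in nhds x, F y ⊆ U

/-- Lower semicontinuity of a set-valued map (sequential form). -/
def LowerSemicontinuousSV (F : E → Set E) : Prop :=
  ∀ x : E, ∀ y ∈ F x, ∀ u : ℕ → E, Filter.Tendsto u Filter.atTop (nhds x) →
    ∃ v : ℕ → E, (∀ i, v i ∈ F (u i)) ∧ Filter.Tendsto v Filter.atTop (nhds y)

section Aux

variable {H : Type*} [NormedAddCommGroup H] [InnerProductSpace ℝ H] [CompleteSpace H]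

/-- A "good scale" predicate used to build the perturbation radius `ε`. -/
def Pgood (F : H → Set H) (B : H → ℝ) (Γ : Set H) (y : H) (t : ℝ) : Prop :=
  ∀ w ∈ Metric.closedBall y (3 * t), ∀ η ∈ F w,
    ‖η‖ ≤ 1 / t ∧ ∀ z ∈ Metric.closedBall y (3 * t) ∩ Γ,
      ⟪gradient B z, η⟫ ≤ -t * (2 + ‖gradient B z‖)

lemma Pgood.mono {F : H → Set H} {B : H → ℝ} {Γ : Set H} {y : H} {t t' : ℝ}
    (h : Pgood F B Γ y t) (h0 : 0 < t') (htt : t' ≤ t) : Pgood F B Γ y t' := by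
  intro w hw η hη
  have h3 : (3:ℝ) * t' ≤ 3 * t := by linarith
  obtain ⟨h1, h2⟩ := h w (Metric.closedBall_subset_closedBall h3 hw) η hη
  refine ⟨h1.trans (one_div_le_one_div_of_le h0 htt), fun z hz => ?_⟩
  have := h2 z ⟨Metric.closedBall_subset_closedBall h3 hz.1, hz.2⟩
  nlinarith [norm_nonneg (gradient B z)]

lemma Pgood.inherit {F : H → Set H} {B : H → ℝ} {Γ : Set H} {y y' : H} {s : ℝ}
    (h : Pgood F B Γ y s) (h0 : 0 < s) (hd : dist y' y ≤ s) : Pgood F B Γ y' (s / 2) := by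
  intro w hw η hη
  have hsub : Metric.closedBall y' (3 * (s / 2)) ⊆ Metric.closedBall y (3 * s) := by
    intro z hz
    rw [Metric.mem_closedBall] at hz ⊢
    calc dist z y ≤ dist z y' + dist y' y := dist_triangle _ _ _
      _ ≤ 3 * (s / 2) + s := add_le_add hz hd
      _ ≤ 3 * s := by linarith
  obtain ⟨h1, h2⟩ := h w (hsub hw) η hη
  refine ⟨h1.trans (one_div_le_one_div_of_le (by linarith) (by linarith)), fun z hz => ?_⟩
  have := h2 z ⟨hsub hz.1, hz.2⟩
  nlinarith [norm_nonneg (gradient B z)]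

lemma usc_closedBall {F : H → Set H} (hF : UpperSemicontinuousSV F) {x : H} {U : Set H}
    (hU : IsOpen U) (hsub : F x ⊆ U) :
    ∃ r > 0, ∀ y ∈ Metric.closedBall x r, F y ⊆ U := by
  obtain ⟨δ, hδ, h⟩ := Metric.eventually_nhds_iff.1 (hF x U hU hsub)
  exact ⟨δ / 2, by linarith, fun y hy =>
    h (lt_of_le_of_lt (Metric.mem_closedBall.1 hy) (by linarith))⟩

lemma pgood_exists {F : H → Set H} {B : H → ℝ}
    (hFusc : UpperSemicontinuousSV F) (hFne : ∀ x, (F x).Nonempty)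
    (hFcpt : ∀ x, IsCompact (F x)) (hgB : Continuous (gradient B))
    (hgrad : ∀ x ∈ frontier {y | B y ≤ 0}, ∀ η ∈ F x, ⟪gradient B x, η⟫ < 0)
    (y : H) : ∃ t, 0 < t ∧ Pgood F B (frontier {y | B y ≤ 0}) y t := by
  set Γ : Set H := frontier {y | B y ≤ 0} with hΓdef
  obtain ⟨R, hR0, hRsub⟩ := (hFcpt y).isBounded.subset_closedBall_lt 0 0
  have hR1 : (0:ℝ) < R + 1 := by linarith
  by_cases hyΓ : y ∈ Γ
  · -- frontier case
    set p := gradient B y with hpdef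
    obtain ⟨η₀, hη₀F, hmax⟩ := (hFcpt y).exists_isMaxOn (hFne y)
      (f := fun η => ⟪p, η⟫)
      (Continuous.continuousOn (continuous_const.inner continuous_id))
    set c : ℝ := -⟪p, η₀⟫ with hcdef
    have hc : 0 < c := by
      have := hgrad y hyΓ η₀ hη₀F
      simp only [hcdef]; linarith
    set U : Set H := {η | ⟪p, η⟫ < -(c/2)} ∩ Metric.ball 0 (R+1) with hUdef
    have hUopen : IsOpen U :=
      (isOpen_lt (continuous_const.inner continuous_id) continuous_const).inter
        Metric.isOpen_ball
    have hFyU : F y ⊆ U := by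
      intro η hη
      have hmax' : ⟪p, η⟫ ≤ ⟪p, η₀⟫ := hmax hη
      have hc2 : ⟪p, η₀⟫ = -c := by rw [hcdef]; ring
      refine ⟨show ⟪p, η⟫ < -(c/2) by linarith, ?_⟩
      have := hRsub hη
      rw [Metric.mem_closedBall, dist_zero_right] at this
      rw [Metric.mem_ball, dist_zero_right]; linarith
    obtain ⟨r1, hr1, hU1⟩ := usc_closedBall hFusc hUopen hFyU
    -- gradient continuity near y
    have hmin : (0:ℝ) < min (c / (4 * (R+1))) 1 :=
      lt_min (by positivity) one_pos
    have h0' : Filter.Tendsto (fun z => ‖gradient B z - gradient B y‖) (𝓝 y) (𝓝 0) := by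
      have hc' : Continuous (fun z => ‖gradient B z - gradient B y‖) :=
        (hgB.sub continuous_const).norm
      have := hc'.tendsto y
      simpa using this
    obtain ⟨r2', hr2', hgr⟩ := Metric.eventually_nhds_iff.1
      (h0'.eventually (gt_mem_nhds hmin))
    set r2 := r2' / 2 with hr2def
    have hr2 : 0 < r2 := by simp only [hr2def]; linarith
    have hgr' : ∀ z ∈ Metric.closedBall y r2,
        ‖gradient B z - gradient B y‖ < min (c / (4 * (R+1))) 1 := by
      intro z hz
      exact hgr (lt_of_le_of_lt (Metric.mem_closedBall.1 hz) (by simp only [hr2def]; linarith))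
    set Q : ℝ := ‖p‖ + 1 with hQdef
    have hQpos : 0 < 2 + Q := by positivity
    refine ⟨min (min (r1/3) (r2/3)) (min (c/(4*(2+Q))) (1/(R+1))), ?_, ?_⟩
    · apply lt_min (lt_min (by linarith) (by linarith)) (lt_min (by positivity) (by positivity))
    · set t := min (min (r1/3) (r2/3)) (min (c/(4*(2+Q))) (1/(R+1))) with htdef
      have ht0 : 0 < t :=
        lt_min (lt_min (by linarith) (by linarith)) (lt_min (by positivity) (by positivity))
      have ht1 : t ≤ r1/3 := le_trans (min_le_left _ _) (min_le_left _ _)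
      have ht2 : t ≤ r2/3 := le_trans (min_le_left _ _) (min_le_right _ _)
      have ht3 : t ≤ c/(4*(2+Q)) := le_trans (min_le_right _ _) (min_le_left _ _)
      have ht4 : t ≤ 1/(R+1) := le_trans (min_le_right _ _) (min_le_right _ _)
      intro w hw η hη
      have hw1 : w ∈ Metric.closedBall y r1 :=
        Metric.closedBall_subset_closedBall (by linarith) hw
      obtain ⟨hη1, hη2⟩ := hU1 w hw1 hη
      have hη1' : ⟪p, η⟫ < -(c/2) := hη1
      rw [Metric.mem_ball, dist_zero_right] at hη2
      constructor
      · have hiv : (R+1) ≤ 1/t := by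
          have := one_div_le_one_div_of_le ht0 ht4
          rwa [one_div_one_div] at this
        linarith
      · intro z hz
        have hz2 : z ∈ Metric.closedBall y r2 :=
          Metric.closedBall_subset_closedBall (by linarith) hz.1
        have hgz := hgr' z hz2
        have hgz1 : ‖gradient B z - p‖ ≤ c / (4 * (R+1)) :=
          le_of_lt (lt_of_lt_of_le hgz (min_le_left _ _))
        have hgz2 : ‖gradient B z‖ ≤ Q := by
          have : ‖gradient B z‖ ≤ ‖gradient B z - p‖ + ‖p‖ := by
            simpa using norm_add_le (gradient B z - p) p
          have h2 : ‖gradient B z - p‖ ≤ 1 := le_of_lt (lt_of_lt_of_le hgz (min_le_right _ _))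
          simp only [hQdef]; linarith
        have hsplit : ⟪gradient B z, η⟫ = ⟪p, η⟫ + ⟪gradient B z - p, η⟫ := by
          rw [inner_sub_left]; ring
        have hbd : ⟪gradient B z - p, η⟫ ≤ ‖gradient B z - p‖ * ‖η‖ :=
          real_inner_le_norm _ _
        have hprod : ‖gradient B z - p‖ * ‖η‖ ≤ (c / (4 * (R+1))) * (R+1) := by
          apply mul_le_mul hgz1 (le_of_lt hη2) (norm_nonneg _) (by positivity)
        have hval : (c / (4 * (R+1))) * (R+1) = c/4 := by field_simp
        have hmain : ⟪gradient B z, η⟫ ≤ -(c/4) := by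
          rw [hsplit]; rw [hval] at hprod; linarith [hη1', hbd.trans hprod]
        have hfin : t * (2 + ‖gradient B z‖) ≤ c/4 := by
          have h1 : t * (4*(2+Q)) ≤ c := (le_div_iff₀ (by positivity)).1 ht3
          have h2 : t * ‖gradient B z‖ ≤ t * Q := mul_le_mul_of_nonneg_left hgz2 ht0.le
          nlinarith [ht0.le, norm_nonneg (gradient B z)]
        linarith
  · -- away from the frontier
    have hΓcl : IsClosed Γ := isClosed_frontier
    obtain ⟨r3, hr3, hball⟩ := Metric.isOpen_iff.1 hΓcl.isOpen_compl y hyΓ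
    have hFyU : F y ⊆ Metric.ball 0 (R+1) := by
      intro η hη
      have := hRsub hη
      rw [Metric.mem_closedBall, dist_zero_right] at this
      rw [Metric.mem_ball, dist_zero_right]; linarith
    obtain ⟨r1, hr1, hU1⟩ := usc_closedBall hFusc Metric.isOpen_ball hFyU
    refine ⟨min (min (r1/3) (r3/6)) (1/(R+1)), ?_, ?_⟩
    · exact lt_min (lt_min (by linarith) (by linarith)) (by positivity)
    · set t := min (min (r1/3) (r3/6)) (1/(R+1)) with htdef
      have ht0 : 0 < t := lt_min (lt_min (by linarith) (by linarith)) (by positivity)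
      have ht1 : t ≤ r1/3 := le_trans (min_le_left _ _) (min_le_left _ _)
      have ht2 : t ≤ r3/6 := le_trans (min_le_left _ _) (min_le_right _ _)
      have ht4 : t ≤ 1/(R+1) := min_le_right _ _
      intro w hw η hη
      have hw1 : w ∈ Metric.closedBall y r1 :=
        Metric.closedBall_subset_closedBall (by linarith) hw
      have hη2 := hU1 w hw1 hη
      rw [Metric.mem_ball, dist_zero_right] at hη2
      constructor
      · have hiv : (R+1) ≤ 1/t := by
          have := one_div_le_one_div_of_le ht0 ht4
          rwa [one_div_one_div] at this
        linarith
      · intro z hz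
        exfalso
        have hzball : z ∈ Metric.ball y r3 := by
          rw [Metric.mem_ball]
          have := Metric.mem_closedBall.1 hz.1
          linarith
        exact (hball hzball) hz.2

lemma eps_exists {F : H → Set H} {B : H → ℝ} {Γ : Set H}
    (hex : ∀ y, ∃ t, 0 < t ∧ Pgood F B Γ y t) :
    ∃ ε : H → ℝ, Continuous ε ∧ ∀ y, 0 < ε y ∧ Pgood F B Γ y (2 * ε y) := by
  have hconv : ∀ y : H, Convex ℝ {a : ℝ | 0 < a ∧ Pgood F B Γ y (2 * a)} := by
    intro y
    rw [convex_iff_ordConnected]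
    constructor
    intro a ha b hb z hz
    exact ⟨lt_of_lt_of_le ha.1 hz.1,
      hb.2.mono (by linarith [ha.1, hz.1]) (by linarith [hz.2])⟩
  have hloc : ∀ y : H, ∃ c : ℝ, ∀ᶠ y' in 𝓝 y,
      c ∈ {a : ℝ | 0 < a ∧ Pgood F B Γ y' (2 * a)} := by
    intro y
    obtain ⟨s, hs, hP⟩ := hex y
    refine ⟨s / 4, ?_⟩
    filter_upwards [Metric.ball_mem_nhds y hs] with y' hy'
    refine ⟨by linarith, ?_⟩
    have := hP.inherit hs (le_of_lt (Metric.mem_ball.1 hy'))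
    rwa [show 2 * (s/4) = s/2 by ring]
  obtain ⟨g, hg⟩ := exists_continuous_forall_mem_convex_of_local_const hconv hloc
  exact ⟨g, g.continuous, hg⟩

lemma SolDomain.nonneg_and_subset {D : Set ℝ} (hD : SolDomain D) {t1 : ℝ} (ht : t1 ∈ D) :
    0 ≤ t1 ∧ Set.Icc 0 t1 ⊆ D := by
  rcases hD with ⟨T, _, rfl⟩ | ⟨T, _, rfl⟩ | rfl
  · exact ⟨ht.1, Set.Icc_subset_Icc le_rfl ht.2⟩
  · exact ⟨ht.1, fun s hs => ⟨hs.1, lt_of_le_of_lt hs.2 ht.2⟩⟩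
  · exact ⟨ht, fun s hs => hs.1⟩

end Aux

set_option maxHeartbeats 1000000 in
/-- If `B` is a `C¹` barrier function candidate with `⟨∇B x, η⟩ < 0`
for all `x ∈ ∂K` and `η ∈ F x`, then `ẋ ∈ F x` is strongly robustly safe. -/
theorem stmt2 {n : ℕ} (F : EuclideanSpace ℝ (Fin n) → Set (EuclideanSpace ℝ (Fin n)))
    (hFusc : UpperSemicontinuousSV F)
    (hFne : ∀ x, (F x).Nonempty) (hFcpt : ∀ x, IsCompact (F x)) (hFcvx : ∀ x, Convex ℝ (F x))
    (Xo Xu : Set (EuclideanSpace ℝ (Fin n))) (B : EuclideanSpace ℝ (Fin n) → ℝ)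
    (hB : ContDiff ℝ 1 B) (hBu : ∀ x ∈ Xu, 0 < B x) (hBo : ∀ x ∈ Xo, B x ≤ 0)
    (hgrad : ∀ x ∈ frontier {y | B y ≤ 0}, ∀ η ∈ F x, ⟪gradient B x, η⟫ < 0) :
    StronglyRobustlySafe F Xo Xu := by
  classical
  have hgB : Continuous (gradient B) := by
    have h1 : Continuous (fun x => fderiv ℝ B x) := hB.continuous_fderiv one_ne_zero
    exact ((InnerProductSpace.toDual ℝ _).symm.continuous).comp h1
  obtain ⟨ε, hεc, hεP⟩ :=
    eps_exists (fun y => pgood_exists hFusc hFne hFcpt hgB hgrad y)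
  refine ⟨ε, hεc, fun y => (hεP y).1, ?_⟩
  rintro φ D ⟨hD, v, hvint, hφeq, hvae⟩ hXo t1 ht1D hXu
  have hB1 : 0 < B (φ t1) := hBu _ hXu
  have hB0 : B (φ 0) ≤ 0 := hBo _ hXo
  obtain ⟨ht1nn, hIccD⟩ := hD.nonneg_and_subset ht1D
  have hvI : MeasureTheory.IntegrableOn v (Set.Icc 0 t1) := hvint t1 ht1D
  -- φ is continuous on [0, t1]
  have hφcont : ContinuousOn φ (Set.Icc 0 t1) := by
    have hprim : ContinuousOn (fun s => φ 0 + ∫ τ in (0:ℝ)..s, v τ) (Set.Icc 0 t1) := by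
      apply continuousOn_const.add
      have h2 : MeasureTheory.IntegrableOn v (Set.uIcc 0 t1) := by
        rwa [Set.uIcc_of_le ht1nn]
      have := intervalIntegral.continuousOn_primitive_interval h2
      rwa [Set.uIcc_of_le ht1nn] at this
    exact hprim.congr (fun s hs => hφeq s (hIccD hs))
  -- the last time before t1 at which B ∘ φ is nonpositive
  set S : Set ℝ := Set.Icc 0 t1 ∩ (fun s => B (φ s)) ⁻¹' Set.Iic 0 with hSdef
  have hScl : IsClosed S :=
    ContinuousOn.preimage_isClosed_of_isClosed
      (hB.continuous.comp_continuousOn hφcont) isClosed_Icc isClosed_Iic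
  have h0S : (0:ℝ) ∈ S := ⟨⟨le_rfl, ht1nn⟩, by simpa using hB0⟩
  have hSbdd : BddAbove S := BddAbove.mono Set.inter_subset_left bddAbove_Icc
  set t0 := sSup S with ht0def
  have ht0S : t0 ∈ S := hScl.csSup_mem ⟨0, h0S⟩ hSbdd
  have ht0mem : t0 ∈ Set.Icc 0 t1 := ht0S.1
  have hBt0 : B (φ t0) ≤ 0 := ht0S.2
  have hpos : ∀ s, t0 < s → s ≤ t1 → 0 < B (φ s) := by
    intro s hs hs1
    by_contra hle
    have hsS : s ∈ S := ⟨⟨le_trans ht0mem.1 hs.le, hs1⟩, by simpa using not_lt.1 hle⟩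
    exact absurd (le_csSup hSbdd hsS) (not_le.2 hs)
  have ht0lt : t0 < t1 := by
    rcases lt_or_eq_of_le ht0mem.2 with h | h
    · exact h
    · exfalso; rw [h] at hBt0; exact absurd hBt0 (not_le.2 hB1)
  set x := φ t0 with hxdef
  haveI hne : (𝓝[Set.Ioc t0 t1] t0).NeBot := left_nhdsWithin_Ioc_neBot ht0lt
  have hφt0 : Filter.Tendsto φ (𝓝[Set.Ioc t0 t1] t0) (𝓝 x) := by
    have h1 : ContinuousWithinAt φ (Set.Icc 0 t1) t0 := hφcont t0 ht0mem
    exact h1.tendsto.mono_left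
      (nhdsWithin_mono t0 (fun s hs => ⟨le_trans ht0mem.1 hs.1.le, hs.2⟩))
  have hposev : ∀ᶠ s in 𝓝[Set.Ioc t0 t1] t0, 0 < B (φ s) := by
    filter_upwards [self_mem_nhdsWithin] with s hs
    exact hpos s hs.1 hs.2
  have hBx : B x = 0 := by
    refine le_antisymm hBt0 ?_
    have htd : Filter.Tendsto (fun s => B (φ s)) (𝓝[Set.Ioc t0 t1] t0) (𝓝 (B x)) :=
      (hB.continuous.tendsto x).comp hφt0
    exact ge_of_tendsto htd (hposev.mono fun s hs => hs.le)
  have hxΓ : x ∈ frontier {y | B y ≤ 0} := by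
    rw [frontier_eq_closure_inter_closure]
    constructor
    · exact subset_closure (by simp only [Set.mem_setOf_eq]; exact hBx.le)
    · refine mem_closure_of_tendsto hφt0 (hposev.mono fun s hs => ?_)
      simp only [Set.mem_compl_iff, Set.mem_setOf_eq, not_le]
      exact hs
  -- constants
  set e := ε x with hedef
  have he : 0 < e := (hεP x).1
  set p := gradient B x with hpdef
  set M : ℝ := 1 / e + 2 * e with hMdef
  have hM : 0 < M := by positivity
  set γ : ℝ := e / (M + 1) with hγdef
  have hγ : 0 < γ := by positivity
  -- radius ρ₁ : control of ε near x
  have hρ1ex : ∃ ρ1 > 0, ∀ y, dist y x < ρ1 → e / 2 ≤ ε y ∧ ε y ≤ 2 * e := by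
    have hcε : Filter.Tendsto ε (𝓝 x) (𝓝 e) := hεc.tendsto x
    have hev : ∀ᶠ y in 𝓝 x, dist (ε y) e < e / 2 :=
      hcε (Metric.ball_mem_nhds e (by linarith))
    obtain ⟨ρ1, hρ1p, h⟩ := Metric.eventually_nhds_iff.1 hev
    refine ⟨ρ1, hρ1p, fun y hy => ?_⟩
    have := h hy
    rw [Real.dist_eq, abs_lt] at this
    constructor <;> linarith [this.1, this.2]
  obtain ⟨ρ1, hρ1p, hρ1⟩ := hρ1ex
  -- radius ρ₂ : first-order Taylor estimate for B at x
  have hfd : ∀ u, ⟪p, u⟫ = fderiv ℝ B x u := by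
    intro u
    show ⟪(InnerProductSpace.toDual ℝ _).symm (fderiv ℝ B x), u⟫ = fderiv ℝ B x u
    exact InnerProductSpace.toDual_symm_apply
  have hρ2ex : ∃ ρ2 > 0, ∀ y, dist y x < ρ2 →
      |B y - B x - ⟪p, y - x⟫| ≤ γ * ‖y - x‖ := by
    have hder : HasFDerivAt B (fderiv ℝ B x) x :=
      ((hB.differentiable one_ne_zero) x).hasFDerivAt
    have hlo := hder.isLittleO.def hγ
    obtain ⟨ρ2, hρ2p, h⟩ := Metric.eventually_nhds_iff.1 hlo
    refine ⟨ρ2, hρ2p, fun y hy => ?_⟩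
    have h2 := h hy
    rw [Real.norm_eq_abs] at h2
    rw [hfd]
    exact h2
  obtain ⟨ρ2, hρ2p, hρ2⟩ := hρ2ex
  set ρ : ℝ := min (ρ1/2) (min (ρ2/2) (e/2)) with hρdef
  have hρpos : 0 < ρ := lt_min (by linarith) (lt_min (by linarith) (by linarith))
  have hρa : ρ < ρ1 := lt_of_le_of_lt (min_le_left _ _) (by linarith)
  have hρb : ρ < ρ2 := lt_of_le_of_lt ((min_le_right _ _).trans (min_le_left _ _)) (by linarith)
  have hρc : ρ ≤ e/2 := (min_le_right _ _).trans (min_le_right _ _)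
  -- the key pointwise estimate
  have hkey : ∀ y, dist y x ≤ ρ → ∀ η ∈ strongPert F ε y,
      ⟪p, η⟫ ≤ -(2*e) ∧ ‖η‖ ≤ M := by
    intro y hy η hη
    obtain ⟨heε, heε2⟩ := hρ1 y (lt_of_le_of_lt hy hρa)
    rw [strongPert, Set.mem_add] at hη
    obtain ⟨a, ha, b, hb, rfl⟩ := hη
    set t' : ℝ := 2 * ε y with ht'def
    have ht'0 : 0 < t' := by simp only [ht'def]; linarith
    have hPy : Pgood F B (frontier {y | B y ≤ 0}) y t' := (hεP y).2
    have hCsub : svImage F (Metric.closedBall y (ε y)) ⊆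
        {η : EuclideanSpace ℝ (Fin n) | ⟪p, η⟫ ≤ -t' * (2 + ‖p‖)} ∩
          Metric.closedBall 0 (1/t') := by
      intro η' hη'
      rw [svImage, Set.mem_iUnion₂] at hη'
      obtain ⟨w, hw, hη'F⟩ := hη'
      have hw3 : w ∈ Metric.closedBall y (3 * t') :=
        Metric.closedBall_subset_closedBall (by simp only [ht'def]; linarith) hw
      obtain ⟨h1, h2⟩ := hPy w hw3 η' hη'F
      have hx3 : x ∈ Metric.closedBall y (3 * t') ∩ frontier {y | B y ≤ 0} := by
        refine ⟨Metric.mem_closedBall.2 ?_, hxΓ⟩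
        rw [dist_comm]
        calc dist y x ≤ ρ := hy
          _ ≤ e/2 := hρc
          _ ≤ 3 * t' := by simp only [ht'def]; linarith
      have h3 := h2 x hx3
      exact ⟨h3, mem_closedBall_zero_iff.2 h1⟩
    have hCconv : Convex ℝ ({η : EuclideanSpace ℝ (Fin n) | ⟪p, η⟫ ≤ -t' * (2 + ‖p‖)} ∩
        Metric.closedBall 0 (1/t')) := by
      refine Convex.inter ?_ (convex_closedBall _ _)
      exact convex_halfSpace_le
        ⟨fun u v => inner_add_right _ _ _, fun c u => real_inner_smul_right _ _ _⟩ _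
    have haC := convexHull_min hCsub hCconv ha
    have haC1 : ⟪p, a⟫ ≤ -t' * (2 + ‖p‖) := haC.1
    have haC2 : ‖a‖ ≤ 1/t' := mem_closedBall_zero_iff.1 haC.2
    have hbn : ‖b‖ ≤ ε y := mem_closedBall_zero_iff.1 hb
    constructor
    · have h5 : ⟪p, a + b⟫ = ⟪p, a⟫ + ⟪p, b⟫ := inner_add_right _ _ _
      have h6 : ⟪p, b⟫ ≤ ‖p‖ * ‖b‖ := real_inner_le_norm _ _
      have h7 : ‖p‖ * ‖b‖ ≤ ‖p‖ * ε y := mul_le_mul_of_nonneg_left hbn (norm_nonneg _)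
      rw [h5]
      have hexp : -t' * (2 + ‖p‖) = -(4 * ε y) - 2 * ε y * ‖p‖ := by
        simp only [ht'def]; ring
      nlinarith [norm_nonneg p]
    · calc ‖a + b‖ ≤ ‖a‖ + ‖b‖ := norm_add_le _ _
        _ ≤ 1/t' + ε y := add_le_add haC2 hbn
        _ ≤ M := by
            have h8 : 1/t' ≤ 1/e := by
              apply one_div_le_one_div_of_le he
              simp only [ht'def]; linarith
            simp only [hMdef]; linarith
  -- choose a small time step
  have hev2 : ∀ᶠ s in 𝓝[Set.Icc 0 t1] t0, dist (φ s) x ≤ ρ := by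
    have h1 : ContinuousWithinAt φ (Set.Icc 0 t1) t0 := hφcont t0 ht0mem
    exact h1.tendsto (Metric.closedBall_mem_nhds x hρpos)
  obtain ⟨δ, hδp, hδsub⟩ := Metric.mem_nhdsWithin_iff.1 hev2
  set t : ℝ := min (t0 + δ/2) t1 with htdef
  have htt0 : t0 < t := lt_min (by linarith) ht0lt
  have htle : t ≤ t1 := min_le_right _ _
  have hmemρ : ∀ s ∈ Set.Icc t0 t, dist (φ s) x ≤ ρ := by
    intro s hs
    have hs1 : s ∈ Set.Icc 0 t1 := ⟨le_trans ht0mem.1 hs.1, le_trans hs.2 htle⟩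
    refine hδsub ⟨?_, hs1⟩
    rw [Metric.mem_ball, Real.dist_eq, abs_lt]
    have h1 : s ≤ t0 + δ/2 := le_trans hs.2 (min_le_left _ _)
    constructor <;> linarith [hs.1]
  -- integral estimates
  have htD : t ∈ D := hIccD ⟨le_trans ht0mem.1 htt0.le, htle⟩
  have ht0D : t0 ∈ D := hIccD ht0mem
  have hvI2 : MeasureTheory.IntegrableOn v (Set.Icc t0 t) :=
    hvI.mono_set (Set.Icc_subset_Icc ht0mem.1 htle)
  have hvI0 : MeasureTheory.IntegrableOn v (Set.Icc 0 t0) :=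
    hvI.mono_set (Set.Icc_subset_Icc le_rfl ht0mem.2)
  have hii : IntervalIntegrable v MeasureTheory.volume t0 t := by
    apply MeasureTheory.IntegrableOn.intervalIntegrable
    rwa [Set.uIcc_of_le htt0.le]
  have hii0 : IntervalIntegrable v MeasureTheory.volume 0 t0 := by
    apply MeasureTheory.IntegrableOn.intervalIntegrable
    rwa [Set.uIcc_of_le ht0mem.1]
  have hdiffeq : φ t - x = ∫ s in t0..t, v s := by
    rw [hφeq t htD, hxdef, hφeq t0 ht0D]
    have hadj := intervalIntegral.integral_add_adjacent_intervals hii0 hii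
    rw [← hadj]
    abel
  have haes : ∀ᵐ s ∂(MeasureTheory.volume.restrict (Set.Icc t0 t)),
      ⟪p, v s⟫ ≤ -(2*e) ∧ ‖v s‖ ≤ M := by
    have h1 : ∀ᵐ s ∂(MeasureTheory.volume.restrict (Set.Icc t0 t)),
        v s ∈ strongPert F ε (φ s) :=
      MeasureTheory.ae_restrict_of_ae_restrict_of_subset
        (fun s hs => hIccD ⟨le_trans ht0mem.1 hs.1, le_trans hs.2 htle⟩) hvae
    have h2 : ∀ᵐ s ∂(MeasureTheory.volume.restrict (Set.Icc t0 t)), s ∈ Set.Icc t0 t :=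
      MeasureTheory.ae_restrict_mem measurableSet_Icc
    filter_upwards [h1, h2] with s hs1 hs2
    exact hkey (φ s) (hmemρ s hs2) (v s) hs1
  have hinnerint : IntervalIntegrable (fun s => ⟪p, v s⟫) MeasureTheory.volume t0 t := by
    apply MeasureTheory.IntegrableOn.intervalIntegrable
    rw [Set.uIcc_of_le htt0.le]
    have := (innerSL ℝ p).integrable_comp hvI2
    simp at this; exact this
  have hint1 : ⟪p, φ t - x⟫ ≤ -(2*e) * (t - t0) := by
    have hcomm := (innerSL ℝ p).intervalIntegral_comp_comm hii (a := t0) (b := t)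
    have hmono := intervalIntegral.integral_mono_ae_restrict htt0.le hinnerint
      (intervalIntegrable_const (c := -(2*e)))
      (haes.mono fun s hs => hs.1)
    rw [hdiffeq]
    calc ⟪p, ∫ s in t0..t, v s⟫ = innerSL ℝ p (∫ s in t0..t, v s) := by simp
      _ = ∫ s in t0..t, innerSL ℝ p (v s) := hcomm.symm
      _ = ∫ s in t0..t, ⟪p, v s⟫ := by simp
      _ ≤ ∫ _ in t0..t, -(2*e) := hmono
      _ = -(2*e) * (t - t0) := by
          rw [intervalIntegral.integral_const, smul_eq_mul]; ring
  have hnorm : ‖φ t - x‖ ≤ M * (t - t0) := by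
    rw [hdiffeq]
    have h1 : ‖∫ s in t0..t, v s‖ ≤ ∫ s in t0..t, ‖v s‖ :=
      intervalIntegral.norm_integral_le_integral_norm htt0.le
    have h2 : (∫ s in t0..t, ‖v s‖) ≤ ∫ _ in t0..t, M :=
      intervalIntegral.integral_mono_ae_restrict htt0.le hii.norm
        (intervalIntegrable_const (c := M)) (haes.mono fun s hs => hs.2)
    calc ‖∫ s in t0..t, v s‖ ≤ ∫ s in t0..t, ‖v s‖ := h1
      _ ≤ ∫ _ in t0..t, M := h2
      _ = M * (t - t0) := by
          rw [intervalIntegral.integral_const, smul_eq_mul]; ring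
  -- conclusion
  have hdx : dist (φ t) x ≤ ρ := hmemρ t ⟨htt0.le, le_rfl⟩
  have hrem := hρ2 (φ t) (lt_of_le_of_lt hdx hρb)
  have habs := (abs_le.1 hrem).2
  have hγM : γ * M ≤ e := by
    rw [hγdef, div_mul_eq_mul_div, div_le_iff₀ (by linarith)]
    have : e * (M+1) = e * M + e := by ring
    linarith [he.le]
  have hfinal : 0 < B (φ t) := hpos t htt0 htle
  have hn2 : γ * ‖φ t - x‖ ≤ γ * (M * (t - t0)) := mul_le_mul_of_nonneg_left hnorm hγ.le
  have hmul : γ * (M * (t - t0)) ≤ e * (t - t0) := by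
    rw [← mul_assoc]
    exact mul_le_mul_of_nonneg_right hγM (by linarith)
  have hkey2 : B (φ t) ≤ -(e * (t - t0)) := by
    linarith [habs, hint1, hn2, hmul]
  linarith [mul_pos he (sub_pos.2 htt0)]
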